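/- Let (u_k), (v_k), (w_k), (z_k) be nonnegative real random sequences adapted to a filtration (F_k) with E[u_{k+1} | F_k] ≤ (1 + z_k) u_k - v_k + w_k for all k, Σ_k z_k < ∞ a.s., and Σ_k w_k < ∞ a.s. Then u_k converges almost surely to a finite nonnegative random variable, and Σ_k v_k < ∞ almost surely. -/

import Mathlib

open MeasureTheory Filter Finset

namespace RobbinsSiegmundAux

variable {Ω : Type*}

/-- The discounting product `∏_{j<n} (1+z_j)`. -/
noncomputable def al (z : ℕ → Ω → ℝ) (n : ℕ) (ω : Ω) : ℝ :=
  ∏ j ∈ Finset.range n, (1 + z j ω)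

/-- The transformed process `u_n/α_n + ∑_{j<n} (v_j - w_j)/α_{j+1}`. -/
noncomputable def X (u v w z : ℕ → Ω → ℝ) (n : ℕ) (ω : Ω) : ℝ :=
  (al z n ω)⁻¹ * u n ω + ∑ j ∈ Finset.range n, (al z (j + 1) ω)⁻¹ * (v j ω - w j ω)

/-- The event that the partial sums of `z` and `w` up to time `n` stay below `N`. -/
def gam (w z : ℕ → Ω → ℝ) (N : ℕ) (n : ℕ) : Set Ω :=
  {ω | ∀ k ≤ n, (∑ j ∈ Finset.range (k + 1), z j ω) ≤ N ∧
      (∑ j ∈ Finset.range (k + 1), w j ω) ≤ N}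

/-- The stopped version of `X`. -/
noncomputable def Y (u v w z : ℕ → Ω → ℝ) (N : ℕ) (n : ℕ) (ω : Ω) : ℝ :=
  u 0 ω + ∑ k ∈ Finset.range n,
    (gam w z N k).indicator (fun ω' => X u v w z (k + 1) ω' - X u v w z k ω') ω

lemma gam_antitone (w z : ℕ → Ω → ℝ) (N : ℕ) : Antitone (gam w z N) := by
  intro a b hab ω hω k hk
  exact hω k (hk.trans hab)

variable {u v w z : ℕ → Ω → ℝ} {ω : Ω}

lemma al_zero (z : ℕ → Ω → ℝ) (ω : Ω) : al z 0 ω = 1 := by simp [al]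

lemma al_succ (z : ℕ → Ω → ℝ) (n : ℕ) (ω : Ω) :
    al z (n + 1) ω = al z n ω * (1 + z n ω) := Finset.prod_range_succ _ _

lemma one_le_al (hz : ∀ k, 0 ≤ z k ω) (n : ℕ) : 1 ≤ al z n ω := by
  unfold al
  calc (1:ℝ) = ∏ _j ∈ Finset.range n, (1:ℝ) := by simp
    _ ≤ ∏ j ∈ Finset.range n, (1 + z j ω) :=
        Finset.prod_le_prod (by simp) (fun j _ => by linarith [hz j])

lemma al_pos (hz : ∀ k, 0 ≤ z k ω) (n : ℕ) : 0 < al z n ω :=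
  lt_of_lt_of_le one_pos (one_le_al hz n)

lemma al_inv_le_one (hz : ∀ k, 0 ≤ z k ω) (n : ℕ) : (al z n ω)⁻¹ ≤ 1 :=
  inv_le_one_of_one_le₀ (one_le_al hz n)

lemma al_inv_nonneg (hz : ∀ k, 0 ≤ z k ω) (n : ℕ) : 0 ≤ (al z n ω)⁻¹ :=
  inv_nonneg.2 (al_pos hz n).le

lemma al_mono (hz : ∀ k, 0 ≤ z k ω) : Monotone fun n => al z n ω := by
  apply monotone_nat_of_le_succ
  intro n
  rw [al_succ]
  nlinarith [al_pos hz n, hz n]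

lemma al_le_exp (hz : ∀ k, 0 ≤ z k ω) (hzs : Summable fun k => z k ω) (n : ℕ) :
    al z n ω ≤ Real.exp (∑' k, z k ω) := by
  have h1 : al z n ω ≤ Real.exp (∑ j ∈ Finset.range n, z j ω) := by
    rw [Real.exp_sum]
    apply Finset.prod_le_prod
    · intro j _; linarith [hz j]
    · intro j _; linarith [Real.add_one_le_exp (z j ω)]
  refine h1.trans (Real.exp_le_exp.2 ?_)
  exact Summable.sum_le_tsum _ (fun i _ => hz i) hzs


lemma X_zero (u v w z : ℕ → Ω → ℝ) (ω : Ω) : X u v w z 0 ω = u 0 ω := by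
  simp [X, al_zero]

/-- If the indicator events hold up to time `n`, the stopped process agrees with `X`. -/
lemma Y_eq_X (N : ℕ) (h : ∀ k, k < n → ω ∈ gam w z N k) :
    Y u v w z N n ω = X u v w z n ω := by
  have : ∀ k ∈ Finset.range n,
      (gam w z N k).indicator (fun ω' => X u v w z (k + 1) ω' - X u v w z k ω') ω
        = X u v w z (k + 1) ω - X u v w z k ω := by
    intro k hk
    exact Set.indicator_of_mem (h k (Finset.mem_range.1 hk)) _
  rw [Y, Finset.sum_congr rfl this, Finset.sum_range_sub (fun k => X u v w z k ω), X_zero]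
  ring

/-- Structure of the stopped process: it always equals `X m` for a suitable stopped index. -/
lemma Y_eq_X_stopped (N : ℕ) (n : ℕ) :
    ∃ m ≤ n, Y u v w z N n ω = X u v w z m ω ∧ (∀ k, k < m → ω ∈ gam w z N k) := by
  induction n with
  | zero => exact ⟨0, le_rfl, by simp [Y, X_zero], fun k hk => absurd hk (Nat.not_lt_zero k)⟩
  | succ n ih =>
    obtain ⟨m, hmn, hY, hall⟩ := ih
    have hYs : Y u v w z N (n + 1) ω = Y u v w z N n ω
        + (gam w z N n).indicator (fun ω' => X u v w z (n + 1) ω' - X u v w z n ω') ω := by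
      rw [Y, Y, Finset.sum_range_succ]; ring
    by_cases h : ω ∈ gam w z N n
    · have hk : ∀ k, k < n + 1 → ω ∈ gam w z N k := fun k hk =>
        gam_antitone w z N (Nat.lt_succ_iff.1 hk) h
      refine ⟨n + 1, le_rfl, ?_, hk⟩
      rw [hYs, Set.indicator_of_mem h, Y_eq_X N (fun k hkn => hk k (hkn.trans (Nat.lt_succ_self n)))]
      ring
    · refine ⟨m, hmn.trans (Nat.le_succ n), ?_, hall⟩
      rw [hYs, Set.indicator_of_notMem h, hY, add_zero]

/-- Lower bound for the stopped process. -/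
lemma Y_ge (N : ℕ) (hu : ∀ k, 0 ≤ u k ω) (hv : ∀ k, 0 ≤ v k ω) (hw : ∀ k, 0 ≤ w k ω)
    (hz : ∀ k, 0 ≤ z k ω) (n : ℕ) : -(N : ℝ) ≤ Y u v w z N n ω := by
  obtain ⟨m, _, hY, hall⟩ := Y_eq_X_stopped (u := u) (v := v) (N := N) (n := n) (ω := ω)
  rw [hY]
  have hsw : ∑ j ∈ Finset.range m, w j ω ≤ N := by
    rcases Nat.eq_zero_or_pos m with hm | hm
    · simp only [hm, Finset.range_zero, Finset.sum_empty]; positivity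
    · obtain ⟨m', rfl⟩ : ∃ m', m = m' + 1 := ⟨m - 1, (Nat.succ_pred_eq_of_pos hm).symm⟩
      exact (hall m' (Nat.lt_succ_self _) m' le_rfl).2
  have h1 : 0 ≤ (al z m ω)⁻¹ * u m ω := mul_nonneg (al_inv_nonneg hz m) (hu m)
  have h2 : ∀ j ∈ Finset.range m, -(w j ω) ≤ (al z (j + 1) ω)⁻¹ * (v j ω - w j ω) := by
    intro j _
    have hv' : 0 ≤ (al z (j + 1) ω)⁻¹ * v j ω := mul_nonneg (al_inv_nonneg hz _) (hv j)
    have hw' : (al z (j + 1) ω)⁻¹ * w j ω ≤ w j ω := by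
      have := mul_le_of_le_one_left (hw j) (al_inv_le_one hz (j + 1))
      linarith
    nlinarith
  have h3 : -(N : ℝ) ≤ ∑ j ∈ Finset.range m, (al z (j + 1) ω)⁻¹ * (v j ω - w j ω) := by
    calc -(N : ℝ) ≤ -∑ j ∈ Finset.range m, w j ω := by linarith
      _ = ∑ j ∈ Finset.range m, -(w j ω) := by rw [Finset.sum_neg_distrib]
      _ ≤ _ := Finset.sum_le_sum h2
  rw [X]
  linarith


/-- Pointwise conclusion: if `X` converges at `ω` and the summability assumptions hold there,
then `u` converges to a nonnegative limit and `v` is summable. -/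
lemma pointwise_conclusion (hu : ∀ k, 0 ≤ u k ω) (hv : ∀ k, 0 ≤ v k ω)
    (hw : ∀ k, 0 ≤ w k ω) (hz : ∀ k, 0 ≤ z k ω)
    (hzs : Summable fun k => z k ω) (hws : Summable fun k => w k ω)
    {c : ℝ} (hX : Tendsto (fun n => X u v w z n ω) atTop (nhds c)) :
    (∃ L : ℝ, 0 ≤ L ∧ Tendsto (fun k => u k ω) atTop (nhds L)) ∧
      Summable fun k => v k ω := by
  set B : ℝ := Real.exp (∑' k, z k ω) with hB
  have hBpos : 0 < B := Real.exp_pos _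
  have halB : ∀ n, al z n ω ≤ B := al_le_exp hz hzs
  have hal1 : ∀ n, 1 ≤ al z n ω := one_le_al hz
  have halpos : ∀ n, 0 < al z n ω := al_pos hz
  -- summability of the discounted w
  have hwd : Summable fun j => (al z (j + 1) ω)⁻¹ * w j ω := by
    refine Summable.of_nonneg_of_le
      (fun j => mul_nonneg (al_inv_nonneg hz _) (hw j)) (fun j => ?_) hws
    have := mul_le_of_le_one_left (hw j) (al_inv_le_one hz (j + 1))
    linarith
  -- X is bounded above
  obtain ⟨C, hC⟩ := hX.bddAbove_range
  have hCb : ∀ n, X u v w z n ω ≤ C := fun n => hC (Set.mem_range_self n)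
  -- summability of the discounted v
  have hvd : Summable fun j => (al z (j + 1) ω)⁻¹ * v j ω := by
    refine summable_of_sum_range_le
      (fun j => mul_nonneg (al_inv_nonneg hz _) (hv j)) (c := C + ∑' j, (al z (j + 1) ω)⁻¹ * w j ω)
      (fun n => ?_)
    have hXn := hCb n
    rw [X] at hXn
    have h1 : ∑ j ∈ Finset.range n, (al z (j + 1) ω)⁻¹ * (v j ω - w j ω)
        = ∑ j ∈ Finset.range n, (al z (j + 1) ω)⁻¹ * v j ω
          - ∑ j ∈ Finset.range n, (al z (j + 1) ω)⁻¹ * w j ω := by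
      rw [← Finset.sum_sub_distrib]
      exact Finset.sum_congr rfl fun j _ => by ring
    have h2 : 0 ≤ (al z n ω)⁻¹ * u n ω := mul_nonneg (al_inv_nonneg hz _) (hu n)
    have h3 : ∑ j ∈ Finset.range n, (al z (j + 1) ω)⁻¹ * w j ω
        ≤ ∑' j, (al z (j + 1) ω)⁻¹ * w j ω :=
      Summable.sum_le_tsum _ (fun j _ => mul_nonneg (al_inv_nonneg hz _) (hw j)) hwd
    linarith
  -- summability of v
  have hvs : Summable fun k => v k ω := by
    refine Summable.of_nonneg_of_le hv (fun j => ?_) (hvd.mul_left B)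
    calc v j ω = al z (j + 1) ω * ((al z (j + 1) ω)⁻¹ * v j ω) :=
          (mul_inv_cancel_left₀ (halpos (j + 1)).ne' _).symm
      _ ≤ B * ((al z (j + 1) ω)⁻¹ * v j ω) :=
          mul_le_mul_of_nonneg_right (halB (j + 1))
            (mul_nonneg (al_inv_nonneg hz _) (hv j))
  refine ⟨?_, hvs⟩
  -- convergence of partial sums
  have hSv : Tendsto (fun n => ∑ j ∈ Finset.range n, (al z (j + 1) ω)⁻¹ * v j ω)
      atTop (nhds (∑' j, (al z (j + 1) ω)⁻¹ * v j ω)) := hvd.hasSum.tendsto_sum_nat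
  have hSw : Tendsto (fun n => ∑ j ∈ Finset.range n, (al z (j + 1) ω)⁻¹ * w j ω)
      atTop (nhds (∑' j, (al z (j + 1) ω)⁻¹ * w j ω)) := hwd.hasSum.tendsto_sum_nat
  -- convergence of the discounted u
  have hdu : Tendsto (fun n => (al z n ω)⁻¹ * u n ω) atTop
      (nhds (c - ∑' j, (al z (j + 1) ω)⁻¹ * v j ω + ∑' j, (al z (j + 1) ω)⁻¹ * w j ω)) := by
    have heq : ∀ n, (al z n ω)⁻¹ * u n ω = X u v w z n ω
        - ∑ j ∈ Finset.range n, (al z (j + 1) ω)⁻¹ * v j ω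
        + ∑ j ∈ Finset.range n, (al z (j + 1) ω)⁻¹ * w j ω := by
      intro n
      have h1 : ∑ j ∈ Finset.range n, (al z (j + 1) ω)⁻¹ * (v j ω - w j ω)
          = ∑ j ∈ Finset.range n, (al z (j + 1) ω)⁻¹ * v j ω
            - ∑ j ∈ Finset.range n, (al z (j + 1) ω)⁻¹ * w j ω := by
        rw [← Finset.sum_sub_distrib]
        exact Finset.sum_congr rfl fun j _ => by ring
      rw [X, h1]
      ring
    simp_rw [heq]
    exact (hX.sub hSv).add hSw
  -- convergence of al
  have halc : Tendsto (fun n => al z n ω) atTop (nhds (⨆ n, al z n ω)) :=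
    tendsto_atTop_ciSup (al_mono hz) ⟨B, fun x ⟨n, hn⟩ => hn ▸ halB n⟩
  -- convergence of u
  have huc : Tendsto (fun n => u n ω) atTop
      (nhds ((⨆ n, al z n ω) *
        (c - ∑' j, (al z (j + 1) ω)⁻¹ * v j ω + ∑' j, (al z (j + 1) ω)⁻¹ * w j ω))) := by
    exact (halc.mul hdu).congr fun n => mul_inv_cancel_left₀ (halpos n).ne' _
  exact ⟨_, ge_of_tendsto' huc fun n => hu n, huc⟩


section Measurability

variable {m0 : MeasurableSpace Ω} {ℱ : Filtration ℕ m0}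

lemma al_measurable (hz : Adapted ℱ z) {n m : ℕ} (h : n ≤ m + 1) :
    Measurable[ℱ m] (al z n) := by
  apply Finset.measurable_prod
  intro j hj
  have hjm : j ≤ m := by
    have := Finset.mem_range.1 hj
    omega
  exact measurable_const.add ((hz j).mono (ℱ.mono hjm) le_rfl)

lemma X_measurable (hu : Adapted ℱ u) (hv : Adapted ℱ v) (hw : Adapted ℱ w)
    (hz : Adapted ℱ z) (n : ℕ) : Measurable[ℱ n] (X u v w z n) := by
  apply Measurable.add
  · exact ((al_measurable hz (Nat.le_succ n)).inv).mul (hu n)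
  · apply Finset.measurable_sum
    intro j hj
    have hjn : j + 1 ≤ n := Finset.mem_range.1 hj
    exact ((al_measurable hz (hjn.trans (Nat.le_succ n))).inv).mul
      (((hv j).mono (ℱ.mono (by omega)) le_rfl).sub
        ((hw j).mono (ℱ.mono (by omega)) le_rfl))

lemma gam_measurableSet (hw : Adapted ℱ w) (hz : Adapted ℱ z) (N n : ℕ) :
    MeasurableSet[ℱ n] (gam w z N n) := by
  have : gam w z N n = ⋂ k ∈ Finset.range (n + 1),
      ({ω | (∑ j ∈ Finset.range (k + 1), z j ω) ≤ N} ∩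
        {ω | (∑ j ∈ Finset.range (k + 1), w j ω) ≤ N}) := by
    ext ω
    simp [gam, Nat.lt_succ_iff]
  rw [this]
  refine MeasurableSet.biInter (Finset.range (n + 1)).countable_toSet fun k hk => ?_
  have hkn : k ≤ n := by have := Finset.mem_range.1 (Finset.mem_coe.1 hk); omega
  have hzsum : Measurable[ℱ n] fun ω => ∑ j ∈ Finset.range (k + 1), z j ω :=
    Finset.measurable_sum _ fun j hj =>
      (hz j).mono (ℱ.mono (by have := Finset.mem_range.1 hj; omega)) le_rfl
  have hwsum : Measurable[ℱ n] fun ω => ∑ j ∈ Finset.range (k + 1), w j ω :=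
    Finset.measurable_sum _ fun j hj =>
      (hw j).mono (ℱ.mono (by have := Finset.mem_range.1 hj; omega)) le_rfl
  exact (measurableSet_le hzsum measurable_const).inter
    (measurableSet_le hwsum measurable_const)

lemma Y_adapted (hu : Adapted ℱ u) (hv : Adapted ℱ v) (hw : Adapted ℱ w)
    (hz : Adapted ℱ z) (N : ℕ) : Adapted ℱ (Y u v w z N) := by
  intro n
  apply Measurable.add
  · exact (hu 0).mono (ℱ.mono (Nat.zero_le n)) le_rfl
  · apply Finset.measurable_sum
    intro k hk
    have hkn : k + 1 ≤ n := Finset.mem_range.1 hk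
    have h1 : Measurable[ℱ n] fun ω' => X u v w z (k + 1) ω' - X u v w z k ω' :=
      ((X_measurable hu hv hw hz (k + 1)).mono (ℱ.mono hkn) le_rfl).sub
        ((X_measurable hu hv hw hz k).mono (ℱ.mono (by omega)) le_rfl)
    exact h1.indicator ((ℱ.mono (by omega)) _ (gam_measurableSet hw hz N k))

end Measurability


section Integrability

variable {m0 : MeasurableSpace Ω} {μ : Measure Ω} [IsProbabilityMeasure μ]
  {ℱ : Filtration ℕ m0}

/-- A.e. bound `v k ≤ (1+z_k) u_k + w_k` deduced from the recursion. -/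
lemma v_le_ae (hu_nonneg : ∀ k, 0 ≤ᵐ[μ] u k)
    (hrec : ∀ k, μ[u (k + 1) | ℱ k] ≤ᵐ[μ]
      fun ω => (1 + z k ω) * u k ω - v k ω + w k ω) (k : ℕ) :
    ∀ᵐ ω ∂μ, v k ω ≤ (1 + z k ω) * u k ω + w k ω := by
  have h0 : 0 ≤ᵐ[μ] μ[u (k + 1) | ℱ k] := condExp_nonneg (hu_nonneg (k + 1))
  filter_upwards [h0, hrec k] with ω h1 h2
  simp only [Pi.zero_apply] at h1
  have := h1.trans h2
  linarith

variable (u v w z)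

/-- Integrability of the `u` piece of the stopped increments. -/
lemma integrable_piece_u (hu : Adapted ℱ u) (hw : Adapted ℱ w) (hz : Adapted ℱ z)
    (hu_int : ∀ k, Integrable (u k) μ)
    (hz0 : ∀ᵐ ω ∂μ, ∀ k, 0 ≤ z k ω) (N k m : ℕ) :
    Integrable ((gam w z N k).indicator fun ω => (al z m ω)⁻¹ * u m ω) μ := by
  refine Integrable.mono' (hu_int m).abs ?_ ?_
  · apply Measurable.aestronglyMeasurable
    exact Measurable.indicator
      ((((al_measurable hz (Nat.le_succ m)).mono (ℱ.le m) le_rfl).inv).mul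
        ((hu m).mono (ℱ.le m) le_rfl))
      ((ℱ.le k) _ (gam_measurableSet hw hz N k))
  · filter_upwards [hz0] with ω hz0'
    rw [Real.norm_eq_abs]
    by_cases h : ω ∈ gam w z N k
    · rw [Set.indicator_of_mem h, abs_mul, abs_inv,
        abs_of_pos (al_pos hz0' m)]
      calc (al z m ω)⁻¹ * |u m ω| ≤ 1 * |u m ω| :=
            mul_le_mul_of_nonneg_right (al_inv_le_one hz0' m) (abs_nonneg _)
        _ = |u m ω| := one_mul _
    · rw [Set.indicator_of_notMem h]
      simp [abs_nonneg]

/-- Integrability of the `w` piece of the stopped increments. -/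
lemma integrable_piece_w (hw : Adapted ℱ w) (hz : Adapted ℱ z)
    (hw0 : ∀ᵐ ω ∂μ, ∀ k, 0 ≤ w k ω) (hz0 : ∀ᵐ ω ∂μ, ∀ k, 0 ≤ z k ω) (N k : ℕ) :
    Integrable ((gam w z N k).indicator fun ω => (al z (k + 1) ω)⁻¹ * w k ω) μ := by
  refine Integrable.mono' (integrable_const (N : ℝ)) ?_ ?_
  · apply Measurable.aestronglyMeasurable
    exact Measurable.indicator
      ((((al_measurable hz (le_refl (k + 1))).mono (ℱ.le k) le_rfl).inv).mul
        ((hw k).mono (ℱ.le k) le_rfl))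
      ((ℱ.le k) _ (gam_measurableSet hw hz N k))
  · filter_upwards [hw0, hz0] with ω hw0' hz0'
    rw [Real.norm_eq_abs]
    by_cases h : ω ∈ gam w z N k
    · have hwk : w k ω ≤ N := by
        have h1 := (h k le_rfl).2
        have h2 : w k ω ≤ ∑ j ∈ Finset.range (k + 1), w j ω :=
          Finset.single_le_sum (fun j _ => hw0' j) (Finset.self_mem_range_succ k)
        linarith
      rw [Set.indicator_of_mem h, abs_mul, abs_inv, abs_of_pos (al_pos hz0' (k + 1)),
        abs_of_nonneg (hw0' k)]
      calc (al z (k + 1) ω)⁻¹ * w k ω ≤ 1 * w k ω :=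
            mul_le_mul_of_nonneg_right (al_inv_le_one hz0' (k + 1)) (hw0' k)
        _ ≤ N := by linarith
    · rw [Set.indicator_of_notMem h]
      simp

/-- Integrability of the `v` piece of the stopped increments. -/
lemma integrable_piece_v (hu : Adapted ℱ u) (hv : Adapted ℱ v) (hw : Adapted ℱ w)
    (hz : Adapted ℱ z) (hu_int : ∀ k, Integrable (u k) μ)
    (hu0 : ∀ᵐ ω ∂μ, ∀ k, 0 ≤ u k ω) (hv0 : ∀ᵐ ω ∂μ, ∀ k, 0 ≤ v k ω)
    (hw0 : ∀ᵐ ω ∂μ, ∀ k, 0 ≤ w k ω) (hz0 : ∀ᵐ ω ∂μ, ∀ k, 0 ≤ z k ω)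
    (hvle : ∀ᵐ ω ∂μ, v k ω ≤ (1 + z k ω) * u k ω + w k ω) (N : ℕ) :
    Integrable ((gam w z N k).indicator fun ω => (al z (k + 1) ω)⁻¹ * v k ω) μ := by
  refine Integrable.mono' (((hu_int k).abs.const_mul (1 + N)).add (integrable_const (N : ℝ)))
    ?_ ?_
  · apply Measurable.aestronglyMeasurable
    exact Measurable.indicator
      ((((al_measurable hz (le_refl (k + 1))).mono (ℱ.le k) le_rfl).inv).mul
        ((hv k).mono (ℱ.le k) le_rfl))
      ((ℱ.le k) _ (gam_measurableSet hw hz N k))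
  · filter_upwards [hu0, hv0, hw0, hz0, hvle] with ω hu0' hv0' hw0' hz0' hvle'
    rw [Real.norm_eq_abs]
    simp only [Pi.add_apply]
    by_cases h : ω ∈ gam w z N k
    · have hwk : w k ω ≤ N := by
        have h1 := (h k le_rfl).2
        have h2 : w k ω ≤ ∑ j ∈ Finset.range (k + 1), w j ω :=
          Finset.single_le_sum (fun j _ => hw0' j) (Finset.self_mem_range_succ k)
        linarith
      have hzk : z k ω ≤ N := by
        have h1 := (h k le_rfl).1
        have h2 : z k ω ≤ ∑ j ∈ Finset.range (k + 1), z j ω :=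
          Finset.single_le_sum (fun j _ => hz0' j) (Finset.self_mem_range_succ k)
        linarith
      rw [Set.indicator_of_mem h, abs_of_nonneg
        (mul_nonneg (al_inv_nonneg hz0' (k + 1)) (hv0' k))]
      have h3 : (al z (k + 1) ω)⁻¹ * v k ω ≤ v k ω := by
        calc (al z (k + 1) ω)⁻¹ * v k ω ≤ 1 * v k ω :=
              mul_le_mul_of_nonneg_right (al_inv_le_one hz0' (k + 1)) (hv0' k)
          _ = v k ω := one_mul _
      have h4 : v k ω ≤ (1 + N) * u k ω + N := by
        have : (1 + z k ω) * u k ω ≤ (1 + N) * u k ω :=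
          mul_le_mul_of_nonneg_right (by linarith) (hu0' k)
        linarith
      have h5 : (1 + (N : ℝ)) * u k ω ≤ (1 + N) * |u k ω| :=
        mul_le_mul_of_nonneg_left (le_abs_self _) (by positivity)
      linarith
    · rw [Set.indicator_of_notMem h]
      have : (0 : ℝ) ≤ (1 + N) * |u k ω| := by positivity
      simp only [abs_zero]
      linarith

/-- Integrability of the increments of the stopped process. -/
lemma integrable_piece (hu : Adapted ℱ u) (hv : Adapted ℱ v) (hw : Adapted ℱ w)
    (hz : Adapted ℱ z) (hu_int : ∀ k, Integrable (u k) μ)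
    (hu0 : ∀ᵐ ω ∂μ, ∀ k, 0 ≤ u k ω) (hv0 : ∀ᵐ ω ∂μ, ∀ k, 0 ≤ v k ω)
    (hw0 : ∀ᵐ ω ∂μ, ∀ k, 0 ≤ w k ω) (hz0 : ∀ᵐ ω ∂μ, ∀ k, 0 ≤ z k ω)
    (hvle : ∀ k, ∀ᵐ ω ∂μ, v k ω ≤ (1 + z k ω) * u k ω + w k ω) (N k : ℕ) :
    Integrable ((gam w z N k).indicator
      fun ω => X u v w z (k + 1) ω - X u v w z k ω) μ := by
  have heq : (gam w z N k).indicator (fun ω => X u v w z (k + 1) ω - X u v w z k ω)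
      = fun ω => (gam w z N k).indicator (fun ω => (al z (k + 1) ω)⁻¹ * u (k + 1) ω) ω
        - (gam w z N k).indicator (fun ω => (al z k ω)⁻¹ * u k ω) ω
        + ((gam w z N k).indicator (fun ω => (al z (k + 1) ω)⁻¹ * v k ω) ω
          - (gam w z N k).indicator (fun ω => (al z (k + 1) ω)⁻¹ * w k ω) ω) := by
    funext ω
    by_cases h : ω ∈ gam w z N k
    · simp only [Set.indicator_of_mem h, X, Finset.sum_range_succ]
      ring
    · simp [Set.indicator_of_notMem h]
  rw [heq]
  exact (((integrable_piece_u u w z hu hw hz hu_int hz0 N k (k + 1)).sub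
    (integrable_piece_u u w z hu hw hz hu_int hz0 N k k)).add
    ((integrable_piece_v u v w z hu hv hw hz hu_int hu0 hv0 hw0 hz0 (hvle k) N).sub
      (integrable_piece_w w z hw hz hw0 hz0 N k)))

/-- Integrability of the stopped process. -/
lemma Y_integrable (hu : Adapted ℱ u) (hv : Adapted ℱ v) (hw : Adapted ℱ w)
    (hz : Adapted ℱ z) (hu_int : ∀ k, Integrable (u k) μ)
    (hu0 : ∀ᵐ ω ∂μ, ∀ k, 0 ≤ u k ω) (hv0 : ∀ᵐ ω ∂μ, ∀ k, 0 ≤ v k ω)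
    (hw0 : ∀ᵐ ω ∂μ, ∀ k, 0 ≤ w k ω) (hz0 : ∀ᵐ ω ∂μ, ∀ k, 0 ≤ z k ω)
    (hvle : ∀ k, ∀ᵐ ω ∂μ, v k ω ≤ (1 + z k ω) * u k ω + w k ω) (N n : ℕ) :
    Integrable (Y u v w z N n) μ := by
  have : Y u v w z N n = fun ω => u 0 ω + ∑ k ∈ Finset.range n,
      ((gam w z N k).indicator
        (fun ω' => X u v w z (k + 1) ω' - X u v w z k ω') ω) := rfl
  rw [this]
  exact (hu_int 0).add (integrable_finset_sum _ fun k _ =>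
    integrable_piece u v w z hu hv hw hz hu_int hu0 hv0 hw0 hz0 hvle N k)

end Integrability


section Supermartingale

variable {m0 : MeasurableSpace Ω} {μ : Measure Ω} [IsProbabilityMeasure μ]
  {ℱ : Filtration ℕ m0}

variable (u v w z)

/-- The stopped process is a supermartingale. -/
lemma Y_supermartingale (hu : Adapted ℱ u) (hv : Adapted ℱ v) (hw : Adapted ℱ w)
    (hz : Adapted ℱ z) (hu_int : ∀ k, Integrable (u k) μ)
    (hu0 : ∀ᵐ ω ∂μ, ∀ k, 0 ≤ u k ω) (hv0 : ∀ᵐ ω ∂μ, ∀ k, 0 ≤ v k ω)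
    (hw0 : ∀ᵐ ω ∂μ, ∀ k, 0 ≤ w k ω) (hz0 : ∀ᵐ ω ∂μ, ∀ k, 0 ≤ z k ω)
    (hrec : ∀ k, μ[u (k + 1) | ℱ k] ≤ᵐ[μ]
      fun ω => (1 + z k ω) * u k ω - v k ω + w k ω) (N : ℕ) :
    Supermartingale (Y u v w z N) ℱ μ := by
  have hu0' : ∀ k, 0 ≤ᵐ[μ] u k := fun k => hu0.mono fun ω h => by simpa using h k
  have hvle : ∀ k, ∀ᵐ ω ∂μ, v k ω ≤ (1 + z k ω) * u k ω + w k ω :=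
    fun k => v_le_ae hu0' hrec k
  refine supermartingale_nat (Y_adapted hu hv hw hz N).stronglyAdapted
    (fun n => Y_integrable u v w z hu hv hw hz hu_int hu0 hv0 hw0 hz0 hvle N n)
    (fun n => ?_)
  set s := gam w z N n with hs_def
  have hs : MeasurableSet[ℱ n] s := gam_measurableSet hw hz N n
  set φ : Ω → ℝ := s.indicator fun ω => (al z (n + 1) ω)⁻¹ with hφ_def
  set q : Ω → ℝ := s.indicator
    (fun ω => (al z n ω)⁻¹ * u n ω - (al z (n + 1) ω)⁻¹ * (v n ω - w n ω)) with hq_def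
  -- identification of the increment
  have hsplit : Y u v w z N (n + 1) = Y u v w z N n + (φ * u (n + 1) - q) := by
    funext ω
    have h1 : Y u v w z N (n + 1) ω = Y u v w z N n ω
        + s.indicator (fun ω' => X u v w z (n + 1) ω' - X u v w z n ω') ω := by
      rw [Y, Y, Finset.sum_range_succ]; ring
    rw [h1]
    simp only [Pi.add_apply, Pi.sub_apply, Pi.mul_apply]
    by_cases h : ω ∈ s
    · rw [Set.indicator_of_mem h, hφ_def, hq_def, Set.indicator_of_mem h,
        Set.indicator_of_mem h]
      simp only [X, Finset.sum_range_succ]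
      ring
    · rw [Set.indicator_of_notMem h, hφ_def, hq_def, Set.indicator_of_notMem h,
        Set.indicator_of_notMem h]
      ring
  -- integrability facts
  have hφu_eq : φ * u (n + 1) = s.indicator fun ω => (al z (n + 1) ω)⁻¹ * u (n + 1) ω := by
    funext ω
    simp only [Pi.mul_apply, hφ_def]
    by_cases h : ω ∈ s
    · rw [Set.indicator_of_mem h, Set.indicator_of_mem h]
    · rw [Set.indicator_of_notMem h, Set.indicator_of_notMem h, zero_mul]
  have hφu_int : Integrable (φ * u (n + 1)) μ := by
    rw [hφu_eq]
    exact integrable_piece_u u w z hu hw hz hu_int hz0 N n (n + 1)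
  have hq_eq : q = fun ω => s.indicator (fun ω => (al z n ω)⁻¹ * u n ω) ω
      - (s.indicator (fun ω => (al z (n + 1) ω)⁻¹ * v n ω) ω
        - s.indicator (fun ω => (al z (n + 1) ω)⁻¹ * w n ω) ω) := by
    funext ω
    simp only [hq_def]
    by_cases h : ω ∈ s
    · simp only [Set.indicator_of_mem h]; ring
    · simp only [Set.indicator_of_notMem h]; ring
  have hq_int : Integrable q μ := by
    rw [hq_eq]
    exact (integrable_piece_u u w z hu hw hz hu_int hz0 N n n).sub
      ((integrable_piece_v u v w z hu hv hw hz hu_int hu0 hv0 hw0 hz0 (hvle n) N).sub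
        (integrable_piece_w w z hw hz hw0 hz0 N n))
  have hg_int : Integrable (φ * u (n + 1) - q) μ := hφu_int.sub hq_int
  have hY_int : Integrable (Y u v w z N n) μ :=
    Y_integrable u v w z hu hv hw hz hu_int hu0 hv0 hw0 hz0 hvle N n
  -- strong measurability facts at level n
  have hal_n : Measurable[ℱ n] (al z n) := al_measurable hz (Nat.le_succ n)
  have hal_n1 : Measurable[ℱ n] (al z (n + 1)) := al_measurable hz le_rfl
  have hφ_sm : StronglyMeasurable[ℱ n] φ :=
    (Measurable.indicator hal_n1.inv hs).stronglyMeasurable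
  have hq_sm : StronglyMeasurable[ℱ n] q := by
    apply Measurable.stronglyMeasurable
    exact Measurable.indicator
      ((hal_n.inv.mul (hu n)).sub
        (hal_n1.inv.mul ((hv n).sub (hw n)))) hs
  have hY_sm : StronglyMeasurable[ℱ n] (Y u v w z N n) := (Y_adapted hu hv hw hz N n).stronglyMeasurable
  -- conditional expectation computation
  have e1 : μ[Y u v w z N (n + 1)|ℱ n] =ᵐ[μ]
      μ[Y u v w z N n|ℱ n] + μ[φ * u (n + 1) - q|ℱ n] := by
    rw [hsplit]
    exact condExp_add hY_int hg_int _
  have e2 : μ[Y u v w z N n|ℱ n] = Y u v w z N n :=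
    condExp_of_stronglyMeasurable (ℱ.le n) hY_sm hY_int
  have e3 : μ[φ * u (n + 1) - q|ℱ n] =ᵐ[μ] μ[φ * u (n + 1)|ℱ n] - μ[q|ℱ n] :=
    condExp_sub hφu_int hq_int _
  have e4 : μ[φ * u (n + 1)|ℱ n] =ᵐ[μ] φ * μ[u (n + 1)|ℱ n] :=
    condExp_mul_of_stronglyMeasurable_left hφ_sm hφu_int (hu_int (n + 1))
  have e5 : μ[q|ℱ n] = q := condExp_of_stronglyMeasurable (ℱ.le n) hq_sm hq_int
  have hg_le : μ[φ * u (n + 1) - q|ℱ n] ≤ᵐ[μ] 0 := by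
    filter_upwards [e3, e4, hrec n, hz0] with ω h3 h4 hre hz0'
    rw [Pi.zero_apply, h3, Pi.sub_apply, h4, e5, Pi.mul_apply]
    by_cases hmem : ω ∈ s
    · rw [hφ_def, hq_def, Set.indicator_of_mem hmem, Set.indicator_of_mem hmem]
      have hφ0 : 0 ≤ (al z (n + 1) ω)⁻¹ := al_inv_nonneg hz0' (n + 1)
      have h1z : (0 : ℝ) < 1 + z n ω := by linarith [hz0' n]
      have key : (al z (n + 1) ω)⁻¹ * (1 + z n ω) = (al z n ω)⁻¹ := by
        rw [al_succ, mul_inv, mul_assoc, inv_mul_cancel₀ h1z.ne', mul_one]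
      have step : (al z (n + 1) ω)⁻¹ * (μ[u (n + 1)|ℱ n]) ω
          ≤ (al z (n + 1) ω)⁻¹ * ((1 + z n ω) * u n ω - v n ω + w n ω) :=
        mul_le_mul_of_nonneg_left hre hφ0
      have expand : (al z (n + 1) ω)⁻¹ * ((1 + z n ω) * u n ω - v n ω + w n ω)
          - ((al z n ω)⁻¹ * u n ω - (al z (n + 1) ω)⁻¹ * (v n ω - w n ω)) = 0 := by
        linear_combination (u n ω) * key
      linarith
    · rw [hφ_def, hq_def, Set.indicator_of_notMem hmem, Set.indicator_of_notMem hmem]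
      simp
  calc μ[Y u v w z N (n + 1)|ℱ n]
      =ᵐ[μ] μ[Y u v w z N n|ℱ n] + μ[φ * u (n + 1) - q|ℱ n] := e1
    _ ≤ᵐ[μ] Y u v w z N n := by
        rw [e2]
        filter_upwards [hg_le] with ω hω
        rw [Pi.add_apply]
        rw [Pi.zero_apply] at hω
        linarith


/-- Almost-sure convergence of the stopped process. -/
lemma Y_tendsto (hu : Adapted ℱ u) (hv : Adapted ℱ v) (hw : Adapted ℱ w)
    (hz : Adapted ℱ z) (hu_int : ∀ k, Integrable (u k) μ)
    (hu0 : ∀ᵐ ω ∂μ, ∀ k, 0 ≤ u k ω) (hv0 : ∀ᵐ ω ∂μ, ∀ k, 0 ≤ v k ω)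
    (hw0 : ∀ᵐ ω ∂μ, ∀ k, 0 ≤ w k ω) (hz0 : ∀ᵐ ω ∂μ, ∀ k, 0 ≤ z k ω)
    (hrec : ∀ k, μ[u (k + 1) | ℱ k] ≤ᵐ[μ]
      fun ω => (1 + z k ω) * u k ω - v k ω + w k ω) (N : ℕ) :
    ∀ᵐ ω ∂μ, ∃ c, Tendsto (fun n => Y u v w z N n ω) atTop (nhds c) := by
  have hsup := Y_supermartingale u v w z hu hv hw hz hu_int hu0 hv0 hw0 hz0 hrec N
  have hint : ∀ n, Integrable (Y u v w z N n) μ := fun n => hsup.integrable n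
  have hlb : ∀ n, ∀ᵐ ω ∂μ, -(N : ℝ) ≤ Y u v w z N n ω := fun n => by
    filter_upwards [hu0, hv0, hw0, hz0] with ω h1 h2 h3 h4
    exact Y_ge N h1 h2 h3 h4 n
  have hmean : ∀ n, ∫ ω, Y u v w z N n ω ∂μ ≤ ∫ ω, Y u v w z N 0 ω ∂μ := by
    intro n
    have := hsup.setIntegral_le (Nat.zero_le n) (MeasurableSet.univ)
    simpa [setIntegral_univ] using this
  have habs : ∀ n, ∫ ω, ‖Y u v w z N n ω‖ ∂μ ≤ ∫ ω, Y u v w z N 0 ω ∂μ + 2 * N := by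
    intro n
    have h1 : ∫ ω, ‖Y u v w z N n ω‖ ∂μ ≤ ∫ ω, (Y u v w z N n ω + 2 * N) ∂μ := by
      refine integral_mono_ae (hint n).norm ((hint n).add (integrable_const _)) ?_
      filter_upwards [hlb n] with ω h
      rw [Real.norm_eq_abs]
      rcases abs_cases (Y u v w z N n ω) with ⟨he, _⟩ | ⟨he, _⟩ <;> rw [he] <;> linarith
    have h2 : ∫ ω, (Y u v w z N n ω + 2 * N) ∂μ = ∫ ω, Y u v w z N n ω ∂μ + 2 * N := by
      rw [integral_add (hint n) (integrable_const _), integral_const]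
      simp
    linarith [hmean n]
  have hbdd : ∀ n, eLpNorm (Y u v w z N n) 1 μ
      ≤ (∫ ω, Y u v w z N 0 ω ∂μ + 2 * N).toNNReal := by
    intro n
    have he : eLpNorm (Y u v w z N n) 1 μ
        = ENNReal.ofReal (∫ ω, ‖Y u v w z N n ω‖ ∂μ) := by
      rw [eLpNorm_one_eq_lintegral_enorm, ← ofReal_integral_norm_eq_lintegral_enorm (hint n)]
    rw [he]
    exact ENNReal.ofReal_le_ofReal (habs n)
  have hneg := hsup.neg.exists_ae_tendsto_of_bdd
    (R := (∫ ω, Y u v w z N 0 ω ∂μ + 2 * N).toNNReal)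
    (fun n => by rw [show (-Y u v w z N) n = -(Y u v w z N n) from rfl, eLpNorm_neg]
                 exact hbdd n)
  filter_upwards [hneg] with ω hω
  obtain ⟨c, hc⟩ := hω
  refine ⟨-c, ?_⟩
  have := hc.neg
  simpa using this

end Supermartingale

end RobbinsSiegmundAux

open RobbinsSiegmundAux in
/-- Robbins–Siegmund almost-supermartingale convergence theorem: if nonnegative adapted
sequences satisfy `E[u_{k+1} | F_k] ≤ (1 + z_k) u_k - v_k + w_k` with `Σ z_k < ∞` and
`Σ w_k < ∞` a.s., then `u_k` converges a.s. to a finite nonnegative limit and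
`Σ v_k < ∞` a.s. -/
theorem robbins_siegmund {Ω : Type*} {m0 : MeasurableSpace Ω} {μ : Measure Ω}
    [IsProbabilityMeasure μ] (ℱ : Filtration ℕ m0)
    (u v w z : ℕ → Ω → ℝ)
    (hu_adapted : Adapted ℱ u) (hv_adapted : Adapted ℱ v)
    (hw_adapted : Adapted ℱ w) (hz_adapted : Adapted ℱ z)
    (hu_int : ∀ k, Integrable (u k) μ)
    (hu_nonneg : ∀ k, 0 ≤ᵐ[μ] u k) (hv_nonneg : ∀ k, 0 ≤ᵐ[μ] v k)
    (hw_nonneg : ∀ k, 0 ≤ᵐ[μ] w k) (hz_nonneg : ∀ k, 0 ≤ᵐ[μ] z k)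
    (hrec : ∀ k, μ[u (k + 1) | ℱ k] ≤ᵐ[μ]
      fun ω => (1 + z k ω) * u k ω - v k ω + w k ω)
    (hz_sum : ∀ᵐ ω ∂μ, Summable (fun k => z k ω))
    (hw_sum : ∀ᵐ ω ∂μ, Summable (fun k => w k ω)) :
    ∀ᵐ ω ∂μ, (∃ L : ℝ, 0 ≤ L ∧ Tendsto (fun k => u k ω) atTop (nhds L)) ∧
      Summable (fun k => v k ω) := by
  have hu0 : ∀ᵐ ω ∂μ, ∀ k, 0 ≤ u k ω :=
    ae_all_iff.2 fun k => (hu_nonneg k).mono fun ω h => by simpa using h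
  have hv0 : ∀ᵐ ω ∂μ, ∀ k, 0 ≤ v k ω :=
    ae_all_iff.2 fun k => (hv_nonneg k).mono fun ω h => by simpa using h
  have hw0 : ∀ᵐ ω ∂μ, ∀ k, 0 ≤ w k ω :=
    ae_all_iff.2 fun k => (hw_nonneg k).mono fun ω h => by simpa using h
  have hz0 : ∀ᵐ ω ∂μ, ∀ k, 0 ≤ z k ω :=
    ae_all_iff.2 fun k => (hz_nonneg k).mono fun ω h => by simpa using h
  have hYt : ∀ N : ℕ, ∀ᵐ ω ∂μ, ∃ c,
      Tendsto (fun n => Y u v w z N n ω) atTop (nhds c) :=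
    fun N => Y_tendsto u v w z hu_adapted hv_adapted hw_adapted hz_adapted hu_int
      hu0 hv0 hw0 hz0 hrec N
  filter_upwards [hu0, hv0, hw0, hz0, hz_sum, hw_sum, ae_all_iff.2 hYt]
    with ω h1 h2 h3 h4 h5 h6 h7
  obtain ⟨N, hN⟩ := exists_nat_ge (max (∑' k, z k ω) (∑' k, w k ω))
  have hmem : ∀ k, ω ∈ gam w z N k := by
    intro k k' _
    constructor
    · exact (Summable.sum_le_tsum _ (fun i _ => h4 i) h5).trans ((le_max_left _ _).trans hN)
    · exact (Summable.sum_le_tsum _ (fun i _ => h3 i) h6).trans ((le_max_right _ _).trans hN)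
  obtain ⟨c, hc⟩ := h7 N
  have hXc : Tendsto (fun n => X u v w z n ω) atTop (nhds c) :=
    (Filter.Tendsto.congr (fun n => Y_eq_X N fun k _ => hmem k) hc)
  exact pointwise_conclusion h1 h2 h3 h4 h5 h6 hXc
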